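/- arXiv:1605.06443 — 3 statements merged into one kernel-verified Lean document; each statement's English description precedes it below -/
import Mathlib

section
/- For independent Rademacher random variables ε_1, …, ε_n (each uniform on {−1, +1}) and any vectors a_1, …, a_n ∈ ℝ^c, E[‖Σ_i ε_i a_i‖₂] ≤ ‖a‖ ≤ √2 · E[‖Σ_i ε_i a_i‖₂], where ‖a‖ = (Σ_i ‖a_i‖₂²)^{1/2}; in particular E[|Σ_i ε_i a_i|] ≥ (1/√2)·(Σ_i a_i²)^{1/2} for scalars a_i (Khintchine–Kahane inequality). -/
open MeasureTheory ProbabilityTheory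

section KKauxSection
open Finset

namespace KKaux

/-- sign of a boolean -/
def sg (b : Bool) : ℝ := if b then 1 else -1

lemma sg_not (b : Bool) : sg (!b) = - sg b := by cases b <;> simp [sg]

def flip' {n : ℕ} (i : Fin n) (s : Fin n → Bool) : Fin n → Bool :=
  Function.update s i (!(s i))

def Dsum {n : ℕ} (f : (Fin n → Bool) → ℝ) : ℝ :=
  ∑ i : Fin n, ∑ s : Fin n → Bool, (f s - f (flip' i s))^2

lemma Dsum_nonneg {n : ℕ} (f : (Fin n → Bool) → ℝ) : 0 ≤ Dsum f :=
  Finset.sum_nonneg fun i _ => Finset.sum_nonneg fun s _ => sq_nonneg _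

lemma sum_cube_succ {n : ℕ} (F : (Fin (n+1) → Bool) → ℝ) :
    ∑ t, F t = ∑ s : Fin n → Bool, (F (Fin.cons true s) + F (Fin.cons false s)) := by
  rw [← Equiv.sum_comp (Fin.consEquiv (fun _ : Fin (n+1) => Bool)) F, Fintype.sum_prod_type,
    Fintype.sum_bool, ← Finset.sum_add_distrib]
  rfl

lemma flip_cons_zero {n : ℕ} (b : Bool) (s : Fin n → Bool) :
    flip' 0 (Fin.cons b s) = Fin.cons (!b) s := by
  unfold flip'
  rw [Fin.cons_zero, Fin.update_cons_zero]

lemma flip_cons_succ {n : ℕ} (i : Fin n) (b : Bool) (s : Fin n → Bool) :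
    flip' i.succ (Fin.cons b s) = Fin.cons b (flip' i s) := by
  unfold flip'
  rw [Fin.cons_succ, Fin.cons_update]

lemma Dsum_succ {n : ℕ} (F : (Fin (n+1) → Bool) → ℝ) :
    Dsum F = 2 * (∑ s : Fin n → Bool, (F (Fin.cons true s) - F (Fin.cons false s))^2)
      + (Dsum (fun s => F (Fin.cons true s)) + Dsum (fun s => F (Fin.cons false s))) := by
  unfold Dsum
  rw [Fin.sum_univ_succ]
  congr 1
  · rw [sum_cube_succ (fun t => (F t - F (flip' 0 t))^2), Finset.mul_sum]
    refine Finset.sum_congr rfl fun s _ => ?_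
    rw [flip_cons_zero, flip_cons_zero]
    simp only [Bool.not_true, Bool.not_false]
    ring
  · rw [← Finset.sum_add_distrib]
    refine Finset.sum_congr rfl fun i _ => ?_
    rw [sum_cube_succ (fun t => (F t - F (flip' i.succ t))^2), ← Finset.sum_add_distrib]
    refine Finset.sum_congr rfl fun s _ => ?_
    rw [flip_cons_succ, flip_cons_succ]

lemma Dsum_add_Dsum_sub {n : ℕ} (u v : (Fin n → Bool) → ℝ) :
    Dsum (fun s => u s + v s) + Dsum (fun s => u s - v s) = 2 * (Dsum u + Dsum v) := by
  unfold Dsum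
  rw [← Finset.sum_add_distrib, ← Finset.sum_add_distrib, Finset.mul_sum]
  refine Finset.sum_congr rfl fun i _ => ?_
  rw [← Finset.sum_add_distrib, ← Finset.sum_add_distrib, Finset.mul_sum]
  refine Finset.sum_congr rfl fun s _ => ?_
  ring

lemma poincare {n : ℕ} (f : (Fin n → Bool) → ℝ) :
    4 * ((2^n : ℝ) * (∑ s, (f s)^2) - (∑ s, f s)^2) ≤ (2^n : ℝ) * Dsum f := by
  induction n with
  | zero =>
    have h1 : ∀ g : (Fin 0 → Bool) → ℝ, (∑ s, g s) = g (fun i => i.elim0) := fun g =>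
      Fintype.sum_subsingleton g _
    rw [h1 (fun s => (f s)^2), h1 f]
    simp [Dsum]
  | succ n ih =>
    set N : ℝ := 2^n with hN
    have hNpos : (0:ℝ) < N := by positivity
    set u : (Fin n → Bool) → ℝ := fun s => f (Fin.cons true s) with hu
    set v : (Fin n → Bool) → ℝ := fun s => f (Fin.cons false s) with hv
    set p : (Fin n → Bool) → ℝ := fun s => u s + v s with hp
    set m : (Fin n → Bool) → ℝ := fun s => u s - v s with hm
    have hA : (∑ t, f t) = ∑ s, p s := sum_cube_succ f
    have hSq : 2 * (∑ t, (f t)^2) = (∑ s, (p s)^2) + (∑ s, (m s)^2) := by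
      rw [sum_cube_succ (fun t => (f t)^2), Finset.mul_sum, ← Finset.sum_add_distrib]
      refine Finset.sum_congr rfl fun s _ => ?_
      simp only [hp, hm]
      ring
    have hDf : Dsum f = 2 * (∑ s, (m s)^2) + (Dsum u + Dsum v) := Dsum_succ f
    have hD : Dsum p + Dsum m = 2 * (Dsum u + Dsum v) := Dsum_add_Dsum_sub u v
    have ihp := ih p
    have hDm : 0 ≤ N * Dsum m := mul_nonneg hNpos.le (Dsum_nonneg m)
    have h1 : 4 * ((2^(n+1) : ℝ) * (∑ t, (f t)^2) - (∑ t, f t)^2)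
        = 4 * (N * (∑ s, (p s)^2) - (∑ s, p s)^2) + 4 * (N * ∑ s, (m s)^2) := by
      rw [hA]
      linear_combination (4*N) * hSq
    have h2 : (2^(n+1) : ℝ) * Dsum f
        = 4 * (N * ∑ s, (m s)^2) + (N * Dsum p + N * Dsum m) := by
      rw [hDf]
      linear_combination (-N) * hD
    rw [h1, h2]
    linarith

lemma poincare_even {n : ℕ} (f : (Fin n → Bool) → ℝ)
    (hf : ∀ s, f (fun i => !(s i)) = f s) :
    8 * ((2^n : ℝ) * (∑ s, (f s)^2) - (∑ s, f s)^2) ≤ (2^n : ℝ) * Dsum f := by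
  induction n with
  | zero =>
    have h1 : ∀ g : (Fin 0 → Bool) → ℝ, (∑ s, g s) = g (fun i => i.elim0) := fun g =>
      Fintype.sum_subsingleton g _
    rw [h1 (fun s => (f s)^2), h1 f]
    simp [Dsum]
  | succ n ih =>
    set N : ℝ := 2^n with hN
    have hNpos : (0:ℝ) < N := by positivity
    set u : (Fin n → Bool) → ℝ := fun s => f (Fin.cons true s) with hu
    set v : (Fin n → Bool) → ℝ := fun s => f (Fin.cons false s) with hv
    set p : (Fin n → Bool) → ℝ := fun s => u s + v s with hp
    set m : (Fin n → Bool) → ℝ := fun s => u s - v s with hm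
    have neg_cons : ∀ (b : Bool) (s : Fin n → Bool),
        (fun i => !((Fin.cons b s : Fin (n+1) → Bool) i))
          = (Fin.cons (!b) (fun i => !(s i)) : Fin (n+1) → Bool) := fun b s =>
      Fin.comp_cons Bool.not b s
    have hcons_neg : ∀ (b : Bool) (s : Fin n → Bool),
        f (Fin.cons b (fun i => !(s i))) = f (Fin.cons (!b) s) := by
      intro b s
      have := hf (Fin.cons (!b) s)
      rwa [neg_cons, Bool.not_not] at this
    have hpeven : ∀ s, p (fun i => !(s i)) = p s := by
      intro s
      simp only [hp, hu, hv]
      rw [hcons_neg true s, hcons_neg false s]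
      simp [add_comm]
    have hmodd : ∀ s, m (fun i => !(s i)) = - m s := by
      intro s
      simp only [hm, hu, hv]
      rw [hcons_neg true s, hcons_neg false s]
      simp
    have hm0 : (∑ s, m s) = 0 := by
      have hinv : Function.Involutive (fun s : Fin n → Bool => fun i => !(s i)) := by
        intro s; funext i; simp
      have := Equiv.sum_comp hinv.toPerm m
      simp only [Function.Involutive.coe_toPerm] at this
      have h2 : (∑ s, m s) = - ∑ s, m s := by
        conv_lhs => rw [← this]
        rw [← Finset.sum_neg_distrib]
        exact Finset.sum_congr rfl fun s _ => hmodd s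
      linarith
    have hA : (∑ t, f t) = ∑ s, p s := sum_cube_succ f
    have hSq : 2 * (∑ t, (f t)^2) = (∑ s, (p s)^2) + (∑ s, (m s)^2) := by
      rw [sum_cube_succ (fun t => (f t)^2), Finset.mul_sum, ← Finset.sum_add_distrib]
      refine Finset.sum_congr rfl fun s _ => ?_
      simp only [hp, hm]
      ring
    have hDf : Dsum f = 2 * (∑ s, (m s)^2) + (Dsum u + Dsum v) := Dsum_succ f
    have hD : Dsum p + Dsum m = 2 * (Dsum u + Dsum v) := Dsum_add_Dsum_sub u v
    have ihp := ih p hpeven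
    have hPm := poincare m
    rw [hm0] at hPm
    have h1 : 8 * ((2^(n+1) : ℝ) * (∑ t, (f t)^2) - (∑ t, f t)^2)
        = 8 * (N * (∑ s, (p s)^2) - (∑ s, p s)^2) + 8 * (N * ∑ s, (m s)^2) := by
      rw [hA]
      linear_combination (8*N) * hSq
    have h2 : (2^(n+1) : ℝ) * Dsum f
        = 4 * (N * ∑ s, (m s)^2) + (N * Dsum p + N * Dsum m) := by
      rw [hDf]
      linear_combination (-N) * hD
    rw [h1, h2]
    have : 4 * (N * ∑ s, (m s)^2) ≤ N * Dsum m := by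
      have h3 : (0:ℝ)^2 = 0 := by norm_num
      nlinarith [hPm]
    linarith

section Normed

variable {E : Type*} [NormedAddCommGroup E] [InnerProductSpace ℝ E]

def Sv {n : ℕ} (a : Fin n → E) (s : Fin n → Bool) : E := ∑ i, sg (s i) • a i

lemma Sv_cons {n : ℕ} (a : Fin (n+1) → E) (b : Bool) (s : Fin n → Bool) :
    Sv a (Fin.cons b s) = sg b • a 0 + Sv (fun i => a i.succ) s := by
  unfold Sv
  rw [Fin.sum_univ_succ]
  simp only [Fin.cons_zero, Fin.cons_succ]

lemma card_cube (n : ℕ) : (Fintype.card (Fin n → Bool) : ℝ) = 2^n := by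
  simp [Fintype.card_fun]

lemma sum_normsq {n : ℕ} (a : Fin n → E) :
    ∑ s : Fin n → Bool, ‖Sv a s‖^2 = (2^n : ℝ) * ∑ i, ‖a i‖^2 := by
  induction n with
  | zero => simp [Sv]
  | succ n ih =>
    have key : ∀ s : Fin n → Bool,
        ‖Sv a (Fin.cons true s)‖^2 + ‖Sv a (Fin.cons false s)‖^2
          = 2 * ‖a 0‖^2 + 2 * ‖Sv (fun i => a i.succ) s‖^2 := by
      intro s
      rw [Sv_cons, Sv_cons]
      have h1 : sg true • a 0 + Sv (fun i => a i.succ) s = a 0 + Sv (fun i => a i.succ) s := by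
        simp [sg]
      have h2 : sg false • a 0 + Sv (fun i => a i.succ) s = -(a 0 - Sv (fun i => a i.succ) s) := by
        simp only [sg, if_false, Bool.false_eq_true, neg_smul, one_smul, neg_sub]
        abel
      rw [h1, h2, norm_neg]
      have hpar := parallelogram_law_with_norm ℝ (a 0) (Sv (fun i => a i.succ) s)
      simp only [pow_two]
      linarith
    rw [sum_cube_succ (fun s => ‖Sv a s‖^2), Finset.sum_congr rfl fun s _ => key s,
      Finset.sum_add_distrib, Finset.sum_const, ← Finset.mul_sum, ih (fun i => a i.succ),
      Fin.sum_univ_succ (f := fun i => ‖a i‖^2)]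
    rw [nsmul_eq_mul, Finset.card_univ, card_cube]
    ring

lemma Sv_sub_flip {n : ℕ} (a : Fin n → E) (i : Fin n) (s : Fin n → Bool) :
    Sv a s - Sv a (flip' i s) = (sg (s i) - sg (!(s i))) • a i := by
  unfold Sv flip'
  rw [← Finset.sum_sub_distrib]
  rw [Finset.sum_eq_single i]
  · rw [Function.update_self, sub_smul]
  · intro j _ hj
    rw [Function.update_of_ne hj, sub_self]
  · intro h
    exact absurd (Finset.mem_univ i) h

lemma Dsum_norm_le {n : ℕ} (a : Fin n → E) :
    Dsum (fun s => ‖Sv a s‖) ≤ (2^n : ℝ) * (4 * ∑ i, ‖a i‖^2) := by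
  unfold Dsum
  have key : ∀ (i : Fin n) (s : Fin n → Bool),
      (‖Sv a s‖ - ‖Sv a (flip' i s)‖)^2 ≤ 4 * ‖a i‖^2 := by
    intro i s
    have habs : |‖Sv a s‖ - ‖Sv a (flip' i s)‖| ≤ 2 * ‖a i‖ := by
      refine le_trans (abs_norm_sub_norm_le _ _) ?_
      rw [Sv_sub_flip, norm_smul, Real.norm_eq_abs]
      have : |sg (s i) - sg (!(s i))| = 2 := by cases h : s i <;> norm_num [sg]
      rw [this]
    have h1 := (abs_le.mp habs).1
    have h2 := (abs_le.mp habs).2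
    nlinarith
  calc ∑ i : Fin n, ∑ s : Fin n → Bool, (‖Sv a s‖ - ‖Sv a (flip' i s)‖)^2
      ≤ ∑ i : Fin n, ∑ _s : Fin n → Bool, 4 * ‖a i‖^2 :=
        Finset.sum_le_sum fun i _ => Finset.sum_le_sum fun s _ => key i s
    _ = ∑ i : Fin n, (2^n : ℝ) * (4 * ‖a i‖^2) := by
        refine Finset.sum_congr rfl fun i _ => ?_
        rw [Finset.sum_const, nsmul_eq_mul, Finset.card_univ, card_cube]
    _ = (2^n : ℝ) * ∑ i : Fin n, (4 * ‖a i‖^2) := by rw [← Finset.mul_sum]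
    _ = (2^n : ℝ) * (4 * ∑ i, ‖a i‖^2) := by
        congr 1
        exact (Finset.mul_sum _ _ _).symm

lemma Sv_even {n : ℕ} (a : Fin n → E) (s : Fin n → Bool) :
    ‖Sv a (fun i => !(s i))‖ = ‖Sv a s‖ := by
  have : Sv a (fun i => !(s i)) = - Sv a s := by
    unfold Sv
    rw [← Finset.sum_neg_distrib]
    exact Finset.sum_congr rfl fun i _ => by rw [sg_not, neg_smul]
  rw [this, norm_neg]

lemma disc_upper {n : ℕ} (a : Fin n → E) :
    ((2^n : ℝ)⁻¹ * ∑ s : Fin n → Bool, ‖Sv a s‖)^2 ≤ ∑ i, ‖a i‖^2 := by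
  have cs := sq_sum_le_card_mul_sum_sq (s := Finset.univ)
    (f := fun s : Fin n → Bool => ‖Sv a s‖)
  rw [sum_normsq, Finset.card_univ] at cs
  have hcard : ((Fintype.card (Fin n → Bool) : ℝ)) = 2^n := card_cube n
  rw [hcard] at cs
  have hN : (0:ℝ) < 2^n := by positivity
  rw [mul_pow]
  have h2 : ((2^n : ℝ)⁻¹)^2 * (∑ s : Fin n → Bool, ‖Sv a s‖)^2
      ≤ ((2^n : ℝ)⁻¹)^2 * ((2^n : ℝ) * ((2^n : ℝ) * ∑ i, ‖a i‖^2)) := by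
    refine mul_le_mul_of_nonneg_left cs (by positivity)
  refine h2.trans_eq ?_
  field_simp

lemma disc_lower {n : ℕ} (a : Fin n → E) :
    (∑ i, ‖a i‖^2) ≤ 2 * ((2^n : ℝ)⁻¹ * ∑ s : Fin n → Bool, ‖Sv a s‖)^2 := by
  have hpoin := poincare_even (fun s => ‖Sv a s‖) (fun s => Sv_even a s)
  have hD := Dsum_norm_le a
  have hsq := sum_normsq a
  have hN : (0:ℝ) < 2^n := by positivity
  rw [hsq] at hpoin
  set N : ℝ := 2^n
  set σ : ℝ := ∑ i, ‖a i‖^2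
  set T : ℝ := ∑ s : Fin n → Bool, ‖Sv a s‖
  have h1 : (2^n : ℝ) * Dsum (fun s => ‖Sv a s‖) ≤ N * (N * (4 * σ)) :=
    mul_le_mul_of_nonneg_left hD hN.le
  have h2 : 8 * (N * (N * σ) - T^2) ≤ N * (N * (4 * σ)) := le_trans hpoin h1
  have h3 : N * N * σ ≤ 2 * T^2 := by nlinarith
  have h4 : 2 * (N⁻¹ * T)^2 = 2 * T^2 / (N*N) := by
    rw [mul_pow]
    ring
  rw [h4, le_div_iff₀ (by positivity)]
  nlinarith

lemma disc_final {n : ℕ} (a : Fin n → E) :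
    (2^n : ℝ)⁻¹ * (∑ s : Fin n → Bool, ‖Sv a s‖) ≤ Real.sqrt (∑ i, ‖a i‖^2)
    ∧ Real.sqrt (∑ i, ‖a i‖^2) ≤ Real.sqrt 2 * ((2^n : ℝ)⁻¹ * ∑ s : Fin n → Bool, ‖Sv a s‖) := by
  set A : ℝ := (2^n : ℝ)⁻¹ * ∑ s : Fin n → Bool, ‖Sv a s‖ with hA
  have hA0 : 0 ≤ A := by
    refine mul_nonneg (by positivity) (Finset.sum_nonneg fun s _ => norm_nonneg _)
  constructor
  · have := Real.sqrt_le_sqrt (disc_upper a)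
    rwa [Real.sqrt_sq hA0] at this
  · have h2 : (∑ i, ‖a i‖^2) ≤ (Real.sqrt 2 * A)^2 := by
      have : (Real.sqrt 2 * A)^2 = 2 * A^2 := by
        rw [mul_pow, Real.sq_sqrt (by norm_num : (0:ℝ) ≤ 2)]
      rw [this]
      exact disc_lower a
    have := Real.sqrt_le_sqrt h2
    rwa [Real.sqrt_sq (by positivity)] at this

end Normed

section MeasurePart

open MeasureTheory ProbabilityTheory
open scoped ENNReal Classical

/-- the Rademacher law on ℝ -/
noncomputable def nu : Measure ℝ := (2⁻¹ : ℝ≥0∞) • (Measure.dirac 1 + Measure.dirac (-1))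

lemma nu_apply {A : Set ℝ} (hA : MeasurableSet A) :
    nu A = 2⁻¹ * ((if (1:ℝ) ∈ A then (1:ℝ≥0∞) else 0) + (if (-1:ℝ) ∈ A then (1:ℝ≥0∞) else 0)) := by
  rw [nu, Measure.smul_apply, Measure.add_apply, Measure.dirac_apply' _ hA,
    Measure.dirac_apply' _ hA, smul_eq_mul]
  simp [Set.indicator_apply]

lemma isProb_nu : IsProbabilityMeasure nu := by
  constructor
  rw [nu_apply MeasurableSet.univ]
  simp only [Set.mem_univ, if_true]
  rw [one_add_one_eq_two, ENNReal.inv_mul_cancel (by norm_num) (by norm_num)]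

variable {Ω : Type*} [MeasurableSpace Ω] (μ : Measure Ω) [IsProbabilityMeasure μ]

lemma marginal (e : Ω → ℝ) (hm : Measurable e)
    (h1 : μ {ω | e ω = 1} = 1/2) (h2 : μ {ω | e ω = -1} = 1/2) :
    μ.map e = nu := by
  refine Measure.ext fun A hA => ?_
  rw [Measure.map_apply hm hA, nu_apply hA]
  set P : Set Ω := e ⁻¹' {(1:ℝ)} with hPdef
  set M : Set Ω := e ⁻¹' {(-1:ℝ)} with hMdef
  have hPmeas : MeasurableSet P := hm (measurableSet_singleton _)
  have hMmeas : MeasurableSet M := hm (measurableSet_singleton _)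
  have hPval : μ P = 1/2 := h1
  have hMval : μ M = 1/2 := h2
  have hPM : Disjoint P M := by
    rw [Set.disjoint_left]
    intro ω hω1 hω2
    have a1 : e ω = 1 := hω1
    have a2 : e ω = -1 := hω2
    rw [a1] at a2
    norm_num at a2
  have hunion : μ (P ∪ M) = 1 := by
    rw [measure_union hPM hMmeas, hPval, hMval, ENNReal.add_halves]
  have hcompl : μ (P ∪ M)ᶜ = 0 := by
    rw [measure_compl (hPmeas.union hMmeas) (measure_ne_top μ _), hunion, measure_univ,
      tsub_self]
  have key : μ (e ⁻¹' A) = μ (e ⁻¹' A ∩ P) + μ (e ⁻¹' A ∩ M) := by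
    conv_lhs => rw [← measure_inter_conull hcompl]
    rw [Set.inter_union_distrib_left]
    exact measure_union (hPM.mono Set.inter_subset_right Set.inter_subset_right)
      ((hm hA).inter hMmeas)
  have eP : μ (e ⁻¹' A ∩ P) = (if (1:ℝ) ∈ A then μ P else 0) := by
    by_cases hh : (1:ℝ) ∈ A
    · rw [if_pos hh]
      congr 1
      ext ω
      constructor
      · exact fun h => h.2
      · intro h
        refine ⟨?_, h⟩
        have : e ω = 1 := h
        rw [Set.mem_preimage, this]
        exact hh
    · rw [if_neg hh]
      have hempty : e ⁻¹' A ∩ P = ∅ := by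
        ext ω
        simp only [Set.mem_inter_iff, Set.mem_preimage, Set.mem_empty_iff_false, iff_false]
        rintro ⟨ha, hp⟩
        have : e ω = 1 := hp
        rw [this] at ha
        exact hh ha
      rw [hempty, measure_empty]
  have eM : μ (e ⁻¹' A ∩ M) = (if (-1:ℝ) ∈ A then μ M else 0) := by
    by_cases hh : (-1:ℝ) ∈ A
    · rw [if_pos hh]
      congr 1
      ext ω
      constructor
      · exact fun h => h.2
      · intro h
        refine ⟨?_, h⟩
        have : e ω = -1 := h
        rw [Set.mem_preimage, this]
        exact hh
    · rw [if_neg hh]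
      have hempty : e ⁻¹' A ∩ M = ∅ := by
        ext ω
        simp only [Set.mem_inter_iff, Set.mem_preimage, Set.mem_empty_iff_false, iff_false]
        rintro ⟨ha, hp⟩
        have : e ω = -1 := hp
        rw [this] at ha
        exact hh ha
      rw [hempty, measure_empty]
  rw [key, eP, eM, hPval, hMval]
  by_cases hh1 : (1:ℝ) ∈ A <;> by_cases hh2 : (-1:ℝ) ∈ A <;>
    simp only [hh1, hh2, if_true, if_false, one_div, mul_add, mul_one, mul_zero, add_zero,
      zero_add]

variable {n : ℕ} (ε : Fin n → Ω → ℝ)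

lemma T_meas (hmeas : ∀ i, Measurable (ε i)) : Measurable (fun ω => (fun i => ε i ω)) :=
  measurable_pi_lambda _ hmeas

lemma map_T (hmeas : ∀ i, Measurable (ε i))
    (hindep : iIndepFun ε μ)
    (hlaw : ∀ i, μ {ω | ε i ω = 1} = 1/2 ∧ μ {ω | ε i ω = -1} = 1/2) :
    μ.map (fun ω => (fun i => ε i ω)) = Measure.pi (fun _ : Fin n => nu) := by
  haveI : IsProbabilityMeasure nu := isProb_nu
  refine (Measure.pi_eq fun t ht => ?_).symm
  rw [Measure.map_apply (T_meas ε hmeas) (MeasurableSet.univ_pi ht)]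
  have hpre : (fun ω => (fun i => ε i ω)) ⁻¹' (Set.univ.pi t) = ⋂ i, ε i ⁻¹' (t i) := by
    ext ω
    simp [Set.mem_univ_pi, Set.mem_iInter]
  rw [hpre]
  have hind := hindep.measure_inter_preimage_eq_mul Finset.univ (sets := t)
    (fun i _ => ht i)
  have hbi : (⋂ i ∈ Finset.univ, ε i ⁻¹' (t i)) = ⋂ i, ε i ⁻¹' (t i) := by
    simp
  rw [hbi] at hind
  rw [hind]
  refine Finset.prod_congr rfl fun i _ => ?_
  rw [← Measure.map_apply (hmeas i) (ht i), marginal μ (ε i) (hmeas i) (hlaw i).1 (hlaw i).2]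

noncomputable def cubeMeas (n : ℕ) : Measure (Fin n → ℝ) :=
  ((2:ℝ≥0∞)^n)⁻¹ • ∑ s : Fin n → Bool, Measure.dirac (fun i => sg (s i))

lemma pi_nu_eq (n : ℕ) : Measure.pi (fun _ : Fin n => nu) = cubeMeas n := by
  haveI : IsProbabilityMeasure nu := isProb_nu
  refine Measure.pi_eq fun t ht => ?_
  rw [cubeMeas, Measure.smul_apply, Measure.finset_sum_apply, smul_eq_mul]
  have hbox : MeasurableSet (Set.univ.pi t) := MeasurableSet.univ_pi ht
  have step1 : ∀ s : Fin n → Bool,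
      (Measure.dirac (fun i => sg (s i)) : Measure (Fin n → ℝ)) (Set.univ.pi t)
        = ∏ i, (if sg (s i) ∈ t i then (1:ℝ≥0∞) else 0) := by
    intro s
    rw [Measure.dirac_apply' _ hbox, Finset.prod_boole]
    simp only [Set.indicator_apply, Set.mem_univ_pi]
    congr 1
    simp
  rw [Finset.sum_congr rfl fun s _ => step1 s]
  have step2 : (∑ s : Fin n → Bool, ∏ i, (if sg (s i) ∈ t i then (1:ℝ≥0∞) else 0))
      = ∏ i : Fin n, ((if (1:ℝ) ∈ t i then (1:ℝ≥0∞) else 0) + (if (-1:ℝ) ∈ t i then (1:ℝ≥0∞) else 0)) := by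
    have := Finset.prod_univ_sum (t := fun _ : Fin n => (Finset.univ : Finset Bool))
      (f := fun i b => (if sg b ∈ t i then (1:ℝ≥0∞) else 0))
    rw [Fintype.piFinset_univ] at this
    rw [← this]
    refine Finset.prod_congr rfl fun i _ => ?_
    rw [Fintype.sum_bool]
    simp [sg]
  rw [step2]
  have step3 : ∀ i : Fin n, nu (t i) = 2⁻¹ *
      ((if (1:ℝ) ∈ t i then (1:ℝ≥0∞) else 0) + (if (-1:ℝ) ∈ t i then (1:ℝ≥0∞) else 0)) :=
    fun i => nu_apply (ht i)
  rw [Finset.prod_congr rfl fun i _ => step3 i, Finset.prod_mul_distrib, Finset.prod_const,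
    Finset.card_univ, Fintype.card_fin, ← ENNReal.inv_pow]

lemma integral_cube (f : (Fin n → ℝ) → ℝ) (hf : Continuous f) (hmeas : ∀ i, Measurable (ε i))
    (hindep : iIndepFun ε μ)
    (hlaw : ∀ i, μ {ω | ε i ω = 1} = 1/2 ∧ μ {ω | ε i ω = -1} = 1/2) :
    ∫ ω, f (fun i => ε i ω) ∂μ
      = (2^n : ℝ)⁻¹ * ∑ s : Fin n → Bool, f (fun i => sg (s i)) := by
  have h1 : ∫ ω, f (fun i => ε i ω) ∂μ = ∫ x, f x ∂(μ.map (fun ω => (fun i => ε i ω))) :=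
    (integral_map (T_meas ε hmeas).aemeasurable hf.aestronglyMeasurable).symm
  rw [h1, map_T μ ε hmeas hindep hlaw, pi_nu_eq, cubeMeas, integral_smul_measure]
  have hint : ∀ s : Fin n → Bool, Integrable f (Measure.dirac (fun i => sg (s i))) := by
    intro s
    refine ⟨hf.aestronglyMeasurable, ?_⟩
    rw [HasFiniteIntegral, lintegral_dirac]
    exact ENNReal.coe_lt_top
  rw [integral_finset_sum_measure (fun s _ => hint s)]
  rw [Finset.sum_congr rfl fun s _ => integral_dirac f (fun i => sg (s i))]
  rw [smul_eq_mul]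
  congr 1
  rw [ENNReal.toReal_inv]
  norm_num

end MeasurePart

end KKaux

theorem khintchine_kahane
    {Ω : Type*} [MeasurableSpace Ω] (μ : Measure Ω) [IsProbabilityMeasure μ]
    (n c : ℕ) (ε : Fin n → Ω → ℝ)
    (hmeas : ∀ i, Measurable (ε i))
    (hindep : iIndepFun ε μ)
    (hlaw : ∀ i, μ {ω | ε i ω = 1} = 1/2 ∧ μ {ω | ε i ω = -1} = 1/2)
    (a : Fin n → EuclideanSpace ℝ (Fin c)) (b : Fin n → ℝ) :
    (∫ ω, ‖∑ i, ε i ω • a i‖ ∂μ) ≤ Real.sqrt (∑ i, ‖a i‖ ^ 2) ∧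
    Real.sqrt (∑ i, ‖a i‖ ^ 2) ≤ Real.sqrt 2 * ∫ ω, ‖∑ i, ε i ω • a i‖ ∂μ ∧
    (1 / Real.sqrt 2) * Real.sqrt (∑ i, (b i) ^ 2) ≤
      ∫ ω, |∑ i, ε i ω * b i| ∂μ := by
  have hcont1 : Continuous (fun x : Fin n → ℝ => ‖∑ i, x i • a i‖) :=
    (continuous_finset_sum _ fun i _ => (continuous_apply i).smul continuous_const).norm
  have h1 : (∫ ω, ‖∑ i, ε i ω • a i‖ ∂μ)
      = (2^n : ℝ)⁻¹ * ∑ s : Fin n → Bool, ‖KKaux.Sv a s‖ :=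
    KKaux.integral_cube μ ε (fun x => ‖∑ i, x i • a i‖) hcont1 hmeas hindep hlaw
  have hd := KKaux.disc_final a
  have hcont2 : Continuous (fun x : Fin n → ℝ => |∑ i, x i * b i|) :=
    (continuous_finset_sum _ fun i _ => (continuous_apply i).mul continuous_const).abs
  have h2 : (∫ ω, |∑ i, ε i ω * b i| ∂μ)
      = (2^n : ℝ)⁻¹ * ∑ s : Fin n → Bool, |∑ i, KKaux.sg (s i) * b i| :=
    KKaux.integral_cube μ ε (fun x => |∑ i, x i * b i|) hcont2 hmeas hindep hlaw
  have hbridge : ∀ s : Fin n → Bool, ‖KKaux.Sv b s‖ = |∑ i, KKaux.sg (s i) * b i| := by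
    intro s
    simp [KKaux.Sv, smul_eq_mul, Real.norm_eq_abs]
  have hbsq : (∑ i, ‖b i‖^2) = ∑ i, (b i)^2 := by
    simp [Real.norm_eq_abs, sq_abs]
  have hdb := KKaux.disc_final b
  refine ⟨?_, ?_, ?_⟩
  · rw [h1]
    exact hd.1
  · rw [h1]
    exact hd.2
  · rw [h2]
    have h3 : Real.sqrt (∑ i, (b i)^2)
        ≤ Real.sqrt 2 * ((2^n : ℝ)⁻¹ * ∑ s : Fin n → Bool, |∑ i, KKaux.sg (s i) * b i|) := by
      have := hdb.2
      rw [hbsq] at this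
      rw [← Finset.sum_congr rfl fun s _ => hbridge s]
      exact this
    have h2pos : (0:ℝ) < Real.sqrt 2 := Real.sqrt_pos.mpr (by norm_num)
    calc (1 / Real.sqrt 2) * Real.sqrt (∑ i, (b i)^2)
        ≤ (1 / Real.sqrt 2) * (Real.sqrt 2 *
            ((2^n : ℝ)⁻¹ * ∑ s : Fin n → Bool, |∑ i, KKaux.sg (s i) * b i|)) := by
          exact mul_le_mul_of_nonneg_left h3 (by positivity)
      _ = (2^n : ℝ)⁻¹ * ∑ s : Fin n → Bool, |∑ i, KKaux.sg (s i) * b i| := by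
          field_simp

end KKauxSection
end

section
/- Let h, h̃ : F × Y → ℝ be functions on a finite index set F and finite label set Y, and for each f ∈ F let Y_f ⊆ Y be nonempty. Then |max_{y : F → Y, y(f) ∈ Y_f} Σ_{f ∈ F} h(f, y(f)) − max_{y} Σ_{f ∈ F} h̃(f, y(f))| ≤ √|F| · √(Σ_{f ∈ F} Σ_{y ∈ Y_f} (h(f, y) − h̃(f, y))²). -/
open Classical in
theorem max_assignment_lipschitz {F Y : Type*} [Fintype F] [Fintype Y]
    (Yf : F → Finset Y) (hYf : ∀ f, (Yf f).Nonempty)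
    [Nonempty {y : F → Y // ∀ f, y f ∈ Yf f}]
    (h htil : F → Y → ℝ) :
    |(⨆ y : {y : F → Y // ∀ f, y f ∈ Yf f}, ∑ f, h f (y.1 f)) -
      (⨆ y : {y : F → Y // ∀ f, y f ∈ Yf f}, ∑ f, htil f (y.1 f))| ≤
    Real.sqrt (Fintype.card F) *
      Real.sqrt (∑ f, ∑ y ∈ Yf f, (h f y - htil f y) ^ 2) := by
  set S := {y : F → Y // ∀ f, y f ∈ Yf f}
  set c := Real.sqrt (Fintype.card F) *
      Real.sqrt (∑ f, ∑ y ∈ Yf f, (h f y - htil f y) ^ 2) with hc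
  have hc0 : 0 ≤ c := by positivity
  have key : ∀ y : S, |∑ f, h f (y.1 f) - ∑ f, htil f (y.1 f)| ≤ c := by
    intro y
    rw [← Finset.sum_sub_distrib]
    calc |∑ f, (h f (y.1 f) - htil f (y.1 f))|
        ≤ ∑ f, |h f (y.1 f) - htil f (y.1 f)| := Finset.abs_sum_le_sum_abs _ _
      _ ≤ c := by
          have h1 : (∑ f, |h f (y.1 f) - htil f (y.1 f)|) ^ 2 ≤
              (Fintype.card F : ℝ) * ∑ f, (h f (y.1 f) - htil f (y.1 f)) ^ 2 := by
            simpa [sq_abs, Finset.card_univ] using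
              sq_sum_le_card_mul_sum_sq (s := (Finset.univ : Finset F))
                (f := fun f => |h f (y.1 f) - htil f (y.1 f)|)
          have h2 : ∑ f, (h f (y.1 f) - htil f (y.1 f)) ^ 2 ≤
              ∑ f, ∑ z ∈ Yf f, (h f z - htil f z) ^ 2 := by
            refine Finset.sum_le_sum fun f _ => ?_
            exact Finset.single_le_sum (f := fun z => (h f z - htil f z) ^ 2) (fun z _ => sq_nonneg _) (y.2 f)
          have h3 : (∑ f, |h f (y.1 f) - htil f (y.1 f)|) ^ 2 ≤
              (Fintype.card F : ℝ) * ∑ f, ∑ z ∈ Yf f, (h f z - htil f z) ^ 2 :=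
            h1.trans (mul_le_mul_of_nonneg_left h2 (by positivity))
          have := Real.sqrt_le_sqrt h3
          rw [Real.sqrt_sq (by positivity), Real.sqrt_mul (by positivity)] at this
          exact this.trans_eq rfl
  have fin : Finite S := Subtype.finite
  have bdd1 : BddAbove (Set.range fun y : S => ∑ f, h f (y.1 f)) :=
    Set.Finite.bddAbove (Set.finite_range _)
  have bdd2 : BddAbove (Set.range fun y : S => ∑ f, htil f (y.1 f)) :=
    Set.Finite.bddAbove (Set.finite_range _)
  rw [abs_sub_le_iff]
  constructor
  · rw [sub_le_iff_le_add]
    refine ciSup_le fun y => ?_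
    have hy := abs_le.mp (key y)
    have : ∑ f, h f (y.1 f) ≤ ∑ f, htil f (y.1 f) + c := by linarith [hy.2]
    exact this.trans (by rw [add_comm]; exact add_le_add_right (le_ciSup bdd2 y) c)
  · rw [sub_le_iff_le_add]
    refine ciSup_le fun y => ?_
    have hy := abs_le.mp (key y)
    have : ∑ f, htil f (y.1 f) ≤ ∑ f, h f (y.1 f) + c := by linarith [hy.1]
    exact this.trans (by rw [add_comm]; exact add_le_add_right (le_ciSup bdd1 y) c)
end

section
/- Let L : Y × Y → ℝ≥0 with L bounded by M, h, h̃ : Y → ℝ, ρ > 0, and y ∈ Y a finite set with |Y| ≥ 2. Then |max_{y' ≠ y} L(y', y)·(1 − (h(y) − h(y'))/ρ) − max_{y' ≠ y} L(y', y)·(1 − (h̃(y) − h̃(y'))/ρ)| ≤ (2M/ρ)·max_{y'' ∈ Y} |h(y'') − h̃(y'')|. -/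
lemma abs_sup'_sub_sup'_le_aux {α : Type*} (s : Finset α) (hs : s.Nonempty)
    (f g : α → ℝ) (c : ℝ) (hc : ∀ x ∈ s, |f x - g x| ≤ c) :
    |s.sup' hs f - s.sup' hs g| ≤ c := by
  rw [abs_sub_le_iff]
  constructor
  · rw [sub_le_iff_le_add]
    apply Finset.sup'_le
    intro x hx
    have := abs_le.1 (hc x hx)
    have := Finset.le_sup' g hx
    linarith
  · rw [sub_le_iff_le_add]
    apply Finset.sup'_le
    intro x hx
    have := abs_le.1 (hc x hx)
    have := Finset.le_sup' f hx
    linarith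

open Classical in
theorem multiplicative_margin_lipschitz {Y : Type*} [Fintype Y]
    (hcard : 2 ≤ Fintype.card Y)
    (M ρ : ℝ) (hρ : 0 < ρ)
    (L : Y → Y → ℝ) (hL : ∀ y₁ y₂, L y₁ y₂ ∈ Set.Icc (0 : ℝ) M)
    (h htil : Y → ℝ) (y : Y)
    (hne : (Finset.univ.filter (fun y' : Y => y' ≠ y)).Nonempty) :
    |(Finset.univ.filter (fun y' : Y => y' ≠ y)).sup' hne
        (fun y' => L y' y * (1 - (h y - h y') / ρ)) -
      (Finset.univ.filter (fun y' : Y => y' ≠ y)).sup' hne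
        (fun y' => L y' y * (1 - (htil y - htil y') / ρ))| ≤
      (2 * M / ρ) * Finset.univ.sup' ⟨y, Finset.mem_univ y⟩
        (fun y'' => |h y'' - htil y''|) := by
  apply abs_sup'_sub_sup'_le_aux
  intro x hx
  obtain ⟨hL0, hLM⟩ := hL x y
  have hM : 0 ≤ M := le_trans hL0 hLM
  set S := Finset.univ.sup' ⟨y, Finset.mem_univ y⟩ (fun y'' => |h y'' - htil y''|)
  have hSy : |h y - htil y| ≤ S := Finset.le_sup' (fun y'' => |h y'' - htil y''|) (Finset.mem_univ y)
  have hSx : |h x - htil x| ≤ S := Finset.le_sup' (fun y'' => |h y'' - htil y''|) (Finset.mem_univ x)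
  have key : L x y * (1 - (h y - h x) / ρ) - L x y * (1 - (htil y - htil x) / ρ)
      = L x y * ((htil y - h y) + (h x - htil x)) / ρ := by
    field_simp; ring
  rw [key, abs_div, abs_of_pos hρ, show 2 * M / ρ * S = (2 * M * S) / ρ by ring,
    div_le_div_iff_of_pos_right hρ]
  have h1 : |L x y * ((htil y - h y) + (h x - htil x))|
      ≤ M * (|h y - htil y| + |h x - htil x|) := by
    rw [abs_mul]
    apply mul_le_mul _ _ (abs_nonneg _) hM
    · rwa [abs_of_nonneg hL0]
    · calc |(htil y - h y) + (h x - htil x)| ≤ |htil y - h y| + |h x - htil x| :=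
        abs_add_le _ _
      _ = |h y - htil y| + |h x - htil x| := by rw [abs_sub_comm]
  nlinarith [abs_nonneg (h x - htil x), abs_nonneg (h y - htil y)]
end
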